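/- Let q : 𝔻 → ℂ be continuous with |q(z)| ≤ q₀ < 1 for all z ∈ 𝔻. Let ξ : 𝔻 → 𝔻 be a C¹ diffeomorphism of the unit disc onto itself satisfying the homogeneous Beltrami equation ξ_z̄ = q·ξ_z on 𝔻, and let v : 𝔻 → ℂ be any C¹ function satisfying v_z̄ = q·v_z on 𝔻. Then the function φ = v ∘ ξ⁻¹ is holomorphic on 𝔻. -/

import Mathlib

open Complex Metric

noncomputable section

/-- The Wirtinger derivative `w_z̄ = (w_x + i w_y)/2` (full derivative). -/
def dbarC (w : ℂ → ℂ) (z : ℂ) : ℂ :=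
  (2⁻¹ : ℂ) * (fderiv ℝ w z 1 + Complex.I * fderiv ℝ w z Complex.I)

/-- The Wirtinger derivative `w_z = (w_x − i w_y)/2` (full derivative). -/
def dzC (w : ℂ → ℂ) (z : ℂ) : ℂ :=
  (2⁻¹ : ℂ) * (fderiv ℝ w z 1 - Complex.I * fderiv ℝ w z Complex.I)

/-- Representation of a real-linear map `ℂ → ℂ` in Wirtinger form. -/
lemma clm_rep (L : ℂ →L[ℝ] ℂ) (h : ℂ) :
    L h = (2⁻¹ : ℂ) * (L 1 - Complex.I * L Complex.I) * h
        + (2⁻¹ : ℂ) * (L 1 + Complex.I * L Complex.I) * (starRingEnd ℂ) h := by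
  have key : L ((h.re : ℂ) + (h.im : ℂ) * Complex.I)
      = (2⁻¹ : ℂ) * (L 1 - Complex.I * L Complex.I) * ((h.re : ℂ) + (h.im : ℂ) * Complex.I)
      + (2⁻¹ : ℂ) * (L 1 + Complex.I * L Complex.I) * ((h.re : ℂ) - (h.im : ℂ) * Complex.I) := by
    have e1 : ((h.re : ℂ) + (h.im : ℂ) * Complex.I) = h.re • (1 : ℂ) + h.im • Complex.I := by
      simp only [Complex.real_smul, mul_one]
    rw [e1, map_add, map_smul, map_smul]
    simp only [Complex.real_smul, smul_eq_mul]
    linear_combination ((h.im : ℂ) * L Complex.I) * Complex.I_sq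
  rw [Complex.re_add_im] at key
  rw [key]
  congr 1
  have hc : (starRingEnd ℂ) h = (h.re : ℂ) - (h.im : ℂ) * Complex.I := by
    simp [Complex.ext_iff]
  rw [hc]

/-- If `ξ` is a `C¹` diffeomorphism of the unit disc onto itself solving the homogeneous
Beltrami equation `ξ_z̄ = q·ξ_z` with `|q| ≤ q₀ < 1`, and `v` is any `C¹` solution of
`v_z̄ = q·v_z` on the disc, then `φ = v ∘ ξ⁻¹` is holomorphic on the disc. -/
theorem beltrami_factorization (q₀ : ℝ) (hq₀ : q₀ < 1)
    (q ξ ψ v : ℂ → ℂ)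
    (hq : ContinuousOn q (Metric.ball (0 : ℂ) 1))
    (hqb : ∀ z ∈ Metric.ball (0 : ℂ) 1, ‖q z‖ ≤ q₀)
    (hξ : ContDiffOn ℝ 1 ξ (Metric.ball (0 : ℂ) 1))
    (hbij : Set.BijOn ξ (Metric.ball (0 : ℂ) 1) (Metric.ball (0 : ℂ) 1))
    (hψ : ContDiffOn ℝ 1 ψ (Metric.ball (0 : ℂ) 1))
    (hinv : Set.InvOn ψ ξ (Metric.ball (0 : ℂ) 1) (Metric.ball (0 : ℂ) 1))
    (hξeq : ∀ z ∈ Metric.ball (0 : ℂ) 1, dbarC ξ z = q z * dzC ξ z)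
    (hv : ContDiffOn ℝ 1 v (Metric.ball (0 : ℂ) 1))
    (hveq : ∀ z ∈ Metric.ball (0 : ℂ) 1, dbarC v z = q z * dzC v z) :
    DifferentiableOn ℂ (v ∘ ψ) (Metric.ball (0 : ℂ) 1) := by
  intro z hz
  -- the point w = ψ z lies in the ball
  obtain ⟨u, hu, hξu⟩ := hbij.2.2 hz
  have hw : ψ z ∈ Metric.ball (0 : ℂ) 1 := by
    rw [← hξu, hinv.1 hu]; exact hu
  set w : ℂ := ψ z with hwdef
  have hψz : DifferentiableAt ℝ ψ z :=
    (hψ.contDiffAt (isOpen_ball.mem_nhds hz)).differentiableAt one_ne_zero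
  have hvw : DifferentiableAt ℝ v w :=
    (hv.contDiffAt (isOpen_ball.mem_nhds hw)).differentiableAt one_ne_zero
  have hξw : DifferentiableAt ℝ ξ w :=
    (hξ.contDiffAt (isOpen_ball.mem_nhds hw)).differentiableAt one_ne_zero
  -- ξ ∘ ψ = id near z, hence the composed derivative is the identity
  have hev : (ξ ∘ ψ) =ᶠ[nhds z] id := by
    filter_upwards [isOpen_ball.mem_nhds hz] with x hx
    exact hinv.2 hx
  have hidfd : (fderiv ℝ ξ w).comp (fderiv ℝ ψ z) = ContinuousLinearMap.id ℝ ℂ := by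
    rw [← fderiv_comp (x := z) hξw hψz, hev.fderiv_eq, fderiv_id]
  set L0 : ℂ →L[ℝ] ℂ := fderiv ℝ ξ w with hL0
  set L1 : ℂ →L[ℝ] ℂ := fderiv ℝ ψ z with hL1
  set L2 : ℂ →L[ℝ] ℂ := fderiv ℝ v w with hL2
  set Q : ℂ := q w with hQ
  set c : ℂ := L0 1 with hcdef
  set d : ℂ := L0 Complex.I with hddef
  set p : ℂ := L1 1 with hpdef
  set b : ℂ := L1 Complex.I with hbdef
  set a : ℂ := L2 1 with hadef
  set e : ℂ := L2 Complex.I with hedef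
  -- Beltrami equations
  have E1 : (2⁻¹ : ℂ) * (c + Complex.I * d) = Q * ((2⁻¹ : ℂ) * (c - Complex.I * d)) := by
    have := hξeq w hw
    simpa [dbarC, dzC, ← hL0, ← hcdef, ← hddef] using this
  have E2 : (2⁻¹ : ℂ) * (a + Complex.I * e) = Q * ((2⁻¹ : ℂ) * (a - Complex.I * e)) := by
    have := hveq w hw
    simpa [dbarC, dzC, ← hL2, ← hadef, ← hedef] using this
  -- the identity equations
  have E3 : (2⁻¹ : ℂ) * (c - Complex.I * d) * p
      + (2⁻¹ : ℂ) * (c + Complex.I * d) * (starRingEnd ℂ) p = 1 := by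
    have h1 : L0 (L1 1) = 1 := by
      have := congrArg (fun (T : ℂ →L[ℝ] ℂ) => T 1) hidfd
      simpa using this
    rw [clm_rep L0 p] at h1
    exact h1
  have E4 : (2⁻¹ : ℂ) * (c - Complex.I * d) * b
      + (2⁻¹ : ℂ) * (c + Complex.I * d) * (starRingEnd ℂ) b = Complex.I := by
    have h1 : L0 (L1 Complex.I) = Complex.I := by
      have := congrArg (fun (T : ℂ →L[ℝ] ℂ) => T Complex.I) hidfd
      simpa using this
    rw [clm_rep L0 b] at h1
    exact h1
  -- α₀ ≠ 0
  have hα₀ne : (2⁻¹ : ℂ) * (c - Complex.I * d) ≠ 0 := by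
    intro h0
    have hβ : (2⁻¹ : ℂ) * (c + Complex.I * d) = 0 := by rw [E1, h0, mul_zero]
    rw [h0, hβ] at E3
    simp at E3
  -- the key relation
  have hkey : (b - Complex.I * p) + Q * ((starRingEnd ℂ) b - Complex.I * (starRingEnd ℂ) p) = 0 := by
    have h0 : ((2⁻¹ : ℂ) * (c - Complex.I * d)) * ((b - Complex.I * p)
        + Q * ((starRingEnd ℂ) b - Complex.I * (starRingEnd ℂ) p)) = 0 := by
      linear_combination E4 - Complex.I * E3 - ((starRingEnd ℂ) b - Complex.I * (starRingEnd ℂ) p) * E1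
    exact (mul_eq_zero.mp h0).resolve_left hα₀ne
  -- the composed derivative
  have hM : HasFDerivAt (v ∘ ψ) (L2.comp L1) z :=
    (hvw.hasFDerivAt).comp z (hψz.hasFDerivAt)
  have hM1 : (L2.comp L1) 1 = (2⁻¹ : ℂ) * (a - Complex.I * e) * p
      + (2⁻¹ : ℂ) * (a + Complex.I * e) * (starRingEnd ℂ) p := by
    simp only [ContinuousLinearMap.comp_apply, ← hpdef]
    exact clm_rep L2 p
  have hMI : (L2.comp L1) Complex.I = Complex.I * (L2.comp L1) 1 := by
    have hb' : (L2.comp L1) Complex.I = (2⁻¹ : ℂ) * (a - Complex.I * e) * b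
        + (2⁻¹ : ℂ) * (a + Complex.I * e) * (starRingEnd ℂ) b := by
      simp only [ContinuousLinearMap.comp_apply, ← hbdef]
      exact clm_rep L2 b
    rw [hb', hM1]
    linear_combination ((2⁻¹ : ℂ) * (a - Complex.I * e)) * hkey
      + ((starRingEnd ℂ) b - Complex.I * (starRingEnd ℂ) p) * E2
  -- build the complex-linear derivative
  set g : ℂ →L[ℂ] ℂ := (L2.comp L1) 1 • ContinuousLinearMap.id ℂ ℂ with hg
  have hres : g.restrictScalars ℝ = L2.comp L1 := by
    ext1 h
    have := clm_rep (L2.comp L1) h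
    rw [hMI] at this
    have hval : (L2.comp L1) h = (L2.comp L1) 1 * h := by
      rw [this]
      linear_combination (-(2⁻¹ : ℂ) * (L2.comp L1) 1 * h
        + (2⁻¹ : ℂ) * (L2.comp L1) 1 * (starRingEnd ℂ) h) * Complex.I_sq
    simp [hg, hval, mul_comm]
  have hg' : HasFDerivAt (v ∘ ψ) (g.restrictScalars ℝ) z := by rw [hres]; exact hM
  exact ((hasFDerivAt_of_restrictScalars ℝ hg' rfl).differentiableAt).differentiableWithinAt
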